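/- The ideal I of S generated by all the null-type polynomials x_{α₁β₁α₂β₂} (α₁,β₁,α₂,β₂ ∈ {1,…,N}) is a Poisson ideal for the Poisson–Lie bracket: for every f ∈ S and every h ∈ I, the bracket {f, h}_PL again belongs to I. Consequently the quotient S/I inherits a Poisson bracket from {·,·}_PL. -/

import Mathlib

/-!
STATEMENT 6: The ideal generated by the null-type polynomials is a Poisson ideal
for the Poisson–Lie bracket: {f, I}_PL ⊆ I, so the quotient S/I inherits a Poisson
bracket.
-/

open MvPolynomial Finset

noncomputable section

/-- The entries `Λ_{μν}` of the pseudo-unitary metric (diagonal, ±1). -/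
def LamE (Np Nm : ℕ) (μ ν : Fin (Np + Nm)) : ℂ :=
  if μ = ν then (if (μ : ℕ) < Np then (1 : ℂ) else -1) else 0

/-- The polynomial ring `S = ℂ[x_{αβ} : α,β = 1,…,N]`. -/
abbrev CoalgRing (N : ℕ) := MvPolynomial (Fin N × Fin N) ℂ

/-- The Poisson–Lie bracket
`{f,g}_PL := i Σ (Λ_{α₂β₁} x_{α₁β₂} − Λ_{α₁β₂} x_{α₂β₁}) ∂f/∂x_{α₁β₁} ∂g/∂x_{α₂β₂}`. -/
def pbLie (Np Nm : ℕ) (f g : CoalgRing (Np + Nm)) : CoalgRing (Np + Nm) :=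
  Complex.I • ∑ a1 : Fin (Np + Nm), ∑ b1 : Fin (Np + Nm),
    ∑ a2 : Fin (Np + Nm), ∑ b2 : Fin (Np + Nm),
      (C (LamE Np Nm a2 b1) * X (a1, b2) - C (LamE Np Nm a1 b2) * X (a2, b1)) *
        pderiv (a1, b1) f * pderiv (a2, b2) g

/-- The null-type polynomial `x_{α₁β₁α₂β₂} := x_{α₁β₁}x_{α₂β₂} − x_{α₁β₂}x_{α₂β₁}`. -/
def nullp {N : ℕ} (a1 b1 a2 b2 : Fin N) : CoalgRing N :=
  X (a1, b1) * X (a2, b2) - X (a1, b2) * X (a2, b1)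

/-- The ideal of `S` generated by all null-type polynomials. -/
def nullIdeal (N : ℕ) : Ideal (CoalgRing N) :=
  Ideal.span {p : CoalgRing N | ∃ a1 b1 a2 b2 : Fin N, p = nullp a1 b1 a2 b2}

lemma nullp_mem (N : ℕ) (a1 b1 a2 b2 : Fin N) : nullp a1 b1 a2 b2 ∈ nullIdeal N :=
  Ideal.subset_span ⟨a1, b1, a2, b2, rfl⟩

/-- Additivity of the bracket in the second argument. -/
lemma pbLie_add_right (Np Nm : ℕ) (f g h : CoalgRing (Np + Nm)) :
    pbLie Np Nm f (g + h) = pbLie Np Nm f g + pbLie Np Nm f h := by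
  simp only [pbLie, map_add, mul_add, Finset.sum_add_distrib, smul_add]

/-- Leibniz rule of the bracket in the second argument. -/
lemma pbLie_mul_right (Np Nm : ℕ) (f g h : CoalgRing (Np + Nm)) :
    pbLie Np Nm f (g * h) = pbLie Np Nm f g * h + g * pbLie Np Nm f h := by
  simp only [pbLie, Derivation.leibniz, smul_eq_mul, smul_mul_assoc, mul_smul_comm,
    ← smul_add]
  congr 1
  simp only [Finset.sum_mul, Finset.mul_sum, ← Finset.sum_add_distrib]
  refine Finset.sum_congr rfl fun a1 _ => Finset.sum_congr rfl fun b1 _ =>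
    Finset.sum_congr rfl fun a2 _ => Finset.sum_congr rfl fun b2 _ => ?_
  ring

/-- The crucial computation: contracting the Poisson–Lie kernel against the
derivatives of a null-type polynomial yields a combination of null-type
polynomials. -/
lemma key (Np Nm : ℕ) (α β p q r s : Fin (Np + Nm)) :
    ∑ c : Fin (Np + Nm), ∑ d : Fin (Np + Nm),
      (C (LamE Np Nm c β) * X (α, d) - C (LamE Np Nm α d) * X (c, β)) *
        pderiv (c, d) (nullp p q r s)
    = C (LamE Np Nm p β) * nullp α q r s + C (LamE Np Nm r β) * nullp α s p q
      - C (LamE Np Nm α q) * nullp p β r s - C (LamE Np Nm α s) * nullp r β p q := by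
  have hps : ∀ (c d p q : Fin (Np + Nm)),
      (Pi.single (M := fun _ => CoalgRing (Np + Nm)) (c, d) 1 (p, q) : CoalgRing (Np + Nm))
        = (if c = p then 1 else 0) * (if d = q then 1 else 0) := by
    intro c d p q
    rcases eq_or_ne c p with h | h <;> rcases eq_or_ne d q with h2 | h2 <;>
      simp [Pi.single_apply, Prod.ext_iff, h, h2]
  simp only [nullp, map_sub, Derivation.leibniz, smul_eq_mul, pderiv_X, hps]
  simp only [mul_ite, ite_mul, mul_zero, zero_mul, mul_one, one_mul, mul_sub, sub_mul,
    mul_add, add_mul,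
    Finset.sum_sub_distrib, Finset.sum_add_distrib, Finset.sum_ite_eq, Finset.sum_ite_eq',
    Finset.mem_univ, if_true]
  ring

/-- The bracket of anything with a null-type generator lies in the null ideal. -/
lemma pbLie_nullp_mem (Np Nm : ℕ) (f : CoalgRing (Np + Nm)) (p q r s : Fin (Np + Nm)) :
    pbLie Np Nm f (nullp p q r s) ∈ nullIdeal (Np + Nm) := by
  unfold pbLie
  rw [smul_eq_C_mul]
  refine Ideal.mul_mem_left _ _ ?_
  refine Ideal.sum_mem _ fun a1 _ => Ideal.sum_mem _ fun b1 _ => ?_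
  have hfac : ∑ a2 : Fin (Np + Nm), ∑ b2 : Fin (Np + Nm),
      (C (LamE Np Nm a2 b1) * X (a1, b2) - C (LamE Np Nm a1 b2) * X (a2, b1)) *
        pderiv (a1, b1) f * pderiv (a2, b2) (nullp p q r s)
      = pderiv (a1, b1) f * ∑ a2 : Fin (Np + Nm), ∑ b2 : Fin (Np + Nm),
          (C (LamE Np Nm a2 b1) * X (a1, b2) - C (LamE Np Nm a1 b2) * X (a2, b1)) *
            pderiv (a2, b2) (nullp p q r s) := by
    rw [Finset.mul_sum]
    refine Finset.sum_congr rfl fun a2 _ => ?_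
    rw [Finset.mul_sum]
    exact Finset.sum_congr rfl fun b2 _ => by ring
  rw [hfac, key]
  refine Ideal.mul_mem_left _ _ ?_
  exact Submodule.sub_mem _ (Submodule.sub_mem _
    (Submodule.add_mem _
      (Ideal.mul_mem_left _ _ (nullp_mem _ a1 q r s))
      (Ideal.mul_mem_left _ _ (nullp_mem _ a1 s p q)))
    (Ideal.mul_mem_left _ _ (nullp_mem _ p b1 r s)))
    (Ideal.mul_mem_left _ _ (nullp_mem _ r b1 p q))

theorem nullIdeal_is_poisson_ideal (Np Nm : ℕ) (hN : 1 ≤ Np + Nm) :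
    ∀ f h : CoalgRing (Np + Nm), h ∈ nullIdeal (Np + Nm) →
      pbLie Np Nm f h ∈ nullIdeal (Np + Nm) := by
  intro f h hh
  refine Submodule.span_induction
    (p := fun x _ => pbLie Np Nm f x ∈ nullIdeal (Np + Nm)) ?_ ?_ ?_ ?_ hh
  · rintro x ⟨a1, b1, a2, b2, rfl⟩
    exact pbLie_nullp_mem Np Nm f a1 b1 a2 b2
  · show pbLie Np Nm f 0 ∈ nullIdeal (Np + Nm)
    have : pbLie Np Nm f 0 = 0 := by simp [pbLie]
    rw [this]; exact Submodule.zero_mem _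
  · intro x y _ _ hx hy
    show pbLie Np Nm f (x + y) ∈ nullIdeal (Np + Nm)
    rw [pbLie_add_right]
    exact Submodule.add_mem _ hx hy
  · intro a x hxspan hx
    show pbLie Np Nm f (a • x) ∈ nullIdeal (Np + Nm)
    have : pbLie Np Nm f (a • x) = pbLie Np Nm f a * x + a * pbLie Np Nm f x := by
      rw [smul_eq_mul, pbLie_mul_right]
    rw [this]
    exact Submodule.add_mem _
      (Ideal.mul_mem_left _ _ hxspan)
      (Ideal.mul_mem_left _ _ hx)
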